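/- Let 𝔛 and 𝔜 be Hausdorff topological vector spaces over ℂ, Φ : 𝔛 → 𝔜 a continuous injective linear map with dense range, and for 1 ≤ i ≤ n let S_i : 𝔛 → 𝔛 and T_i : 𝔜 → 𝔜 be continuous linear maps with T_i ∘ Φ = Φ ∘ S_i. Suppose there is a single net (F_α) of linear maps from 𝔜 to 𝔛 which is an approximate inverse intertwining for each triple (Φ, S_i, T_i). Then for every x ∈ 𝔛: if Φx ∈ Σ_{i=1}^n range(T_i), then x belongs to the closure of Σ_{i=1}^n range(S_i) in 𝔛. -/

import Mathlib

open Filter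

/-- A net `F` (indexed by a filter `l`) of linear maps `𝔜 → 𝔛` is an approximate inverse
intertwining (AII) for the intertwining triple `(Φ, S, T)` if `F α (Φ x) → x`,
`Φ (F α y) → y` and `F α (T y) - S (F α y) → 0` along `l`. -/
def IsAII {𝔛 : Type*} [AddCommGroup 𝔛] [Module ℂ 𝔛] [TopologicalSpace 𝔛]
    {𝔜 : Type*} [AddCommGroup 𝔜] [Module ℂ 𝔜] [TopologicalSpace 𝔜]
    {ι : Type*} (l : Filter ι)
    (Φ : 𝔛 →L[ℂ] 𝔜) (S : 𝔛 →L[ℂ] 𝔛) (T : 𝔜 →L[ℂ] 𝔜)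
    (F : ι → (𝔜 →ₗ[ℂ] 𝔛)) : Prop :=
  (∀ x : 𝔛, Tendsto (fun α => F α (Φ x)) l (nhds x)) ∧
  (∀ y : 𝔜, Tendsto (fun α => Φ (F α y)) l (nhds y)) ∧
  (∀ y : 𝔜, Tendsto (fun α => F α (T y) - S (F α y)) l (nhds 0))

/-- If the intertwinings `(Φ, Sᵢ, Tᵢ)`, `1 ≤ i ≤ n`, have a common approximate inverse
intertwining, then `Φ⁻¹(∑ᵢ Im Tᵢ) ⊆ closure (∑ᵢ Im Sᵢ)`. -/
theorem mem_closure_sum_ranges_of_common_AII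
    {𝔛 : Type*} [AddCommGroup 𝔛] [Module ℂ 𝔛] [TopologicalSpace 𝔛]
    [IsTopologicalAddGroup 𝔛] [ContinuousSMul ℂ 𝔛] [T2Space 𝔛]
    {𝔜 : Type*} [AddCommGroup 𝔜] [Module ℂ 𝔜] [TopologicalSpace 𝔜]
    [IsTopologicalAddGroup 𝔜] [ContinuousSMul ℂ 𝔜] [T2Space 𝔜]
    (Φ : 𝔛 →L[ℂ] 𝔜) (hΦinj : Function.Injective Φ) (hΦdr : DenseRange Φ)
    (n : ℕ) (S : Fin n → (𝔛 →L[ℂ] 𝔛)) (T : Fin n → (𝔜 →L[ℂ] 𝔜))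
    (hint : ∀ i x, T i (Φ x) = Φ (S i x))
    {ι : Type*} (l : Filter ι) [l.NeBot] (F : ι → (𝔜 →ₗ[ℂ] 𝔛))
    (hF : ∀ i, IsAII l Φ (S i) (T i) F)
    (x : 𝔛) (v : Fin n → 𝔜) (hx : Φ x = ∑ i, T i (v i)) :
    x ∈ closure {z : 𝔛 | ∃ u : Fin n → 𝔛, z = ∑ i, S i (u i)} := by
  rcases Nat.eq_zero_or_pos n with hn | hn
  · subst hn
    have hx0 : x = 0 := hΦinj (by simpa using hx)
    exact subset_closure ⟨fun i => 0, by simp [hx0]⟩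
  set g : ι → 𝔛 := fun α => ∑ i, S i (F α (v i)) with hg
  have hdiff : Tendsto (fun α => F α (Φ x) - g α) l (nhds 0) := by
    have : (fun α => F α (Φ x) - g α)
        = fun α => ∑ i, (F α (T i (v i)) - S i (F α (v i))) := by
      funext α
      simp [hg, hx, map_sum, Finset.sum_sub_distrib]
    rw [this]
    have := Finset.univ.sum_eq_zero (f := fun _ : Fin n => (0 : 𝔛)) (fun _ _ => rfl)
    rw [← this]
    exact tendsto_finset_sum _ fun i _ => (hF i).2.2 (v i)
  have hgx : Tendsto g l (nhds x) := by
    have := ((hF ⟨0, hn⟩).1 x).sub hdiff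
    · simpa using this
  exact mem_closure_of_tendsto hgx (Eventually.of_forall fun α => ⟨fun i => F α (v i), rfl⟩)
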